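/- For all p ∈ (0, 1/2), for m odd with m = 2d+1, d ≥ 1, letting a = 1/p - 1, we have a * ∑_{i=0}^{d} C(m, d-i) a^{d-i} < ∑_{i=0}^{d} C(m, d+i+1) a^{d+i+1}. -/

import Mathlib

theorem odd_case_aL_lt_U (p : ℝ) (hp0 : 0 < p) (hp : p < 1 / 2)
    (d m : ℕ) (hd : 1 ≤ d) (hm : m = 2 * d + 1) :
    (1 / p - 1) * ∑ i ∈ Finset.range (d + 1),
        (m.choose (d - i) : ℝ) * (1 / p - 1) ^ (d - i)
      < ∑ i ∈ Finset.range (d + 1),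
        (m.choose (d + i + 1) : ℝ) * (1 / p - 1) ^ (d + i + 1) := by
  set a : ℝ := 1 / p - 1 with ha_def
  have ha : 1 < a := by
    have : 2 < 1 / p := by
      rw [lt_div_iff₀ hp0]; linarith
    simp only [ha_def]; linarith
  have ha0 : (0:ℝ) < a := by linarith
  rw [Finset.mul_sum]
  apply Finset.sum_lt_sum
  · intro i hi
    rw [Finset.mem_range] at hi
    have hi' : i ≤ d := by omega
    have hsym : m.choose (d - i) = m.choose (d + i + 1) := by
      have h1 : d + i + 1 ≤ m := by omega
      have : m - (d + i + 1) = d - i := by omega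
      rw [← Nat.choose_symm h1, this]
    rw [hsym]
    have : a * ((m.choose (d + i + 1) : ℝ) * a ^ (d - i))
        = (m.choose (d + i + 1) : ℝ) * a ^ (d - i + 1) := by ring
    rw [this]
    apply mul_le_mul_of_nonneg_left _ (Nat.cast_nonneg _)
    exact pow_le_pow_right₀ (le_of_lt ha) (by omega)
  · refine ⟨1, Finset.mem_range.mpr (by omega), ?_⟩
    have hsym : m.choose (d - 1) = m.choose (d + 1 + 1) := by
      have h1 : d + 1 + 1 ≤ m := by omega
      have : m - (d + 1 + 1) = d - 1 := by omega
      rw [← Nat.choose_symm h1, this]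
    rw [hsym]
    have heq : a * ((m.choose (d + 1 + 1) : ℝ) * a ^ (d - 1))
        = (m.choose (d + 1 + 1) : ℝ) * a ^ (d - 1 + 1) := by ring
    rw [heq]
    have hc : (0:ℝ) < (m.choose (d + 1 + 1) : ℝ) := by
      have : d + 1 + 1 ≤ m := by omega
      exact_mod_cast Nat.choose_pos this
    apply mul_lt_mul_of_pos_left _ hc
    exact pow_lt_pow_right₀ ha (by omega)
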